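/- arXiv:1510.05178 — 3 statements merged into one kernel-verified Lean document; each statement's English description precedes it below -/
import Mathlib

section
/- Let G be a simple graph on the vertex set Fin N (N ≥ 2) with arbitrary real edge weights w, and let n be a composition of N with K ≥ 2 parts. Then every eigenvalue of the weighted graph Laplacian L_G(w) is an eigenvalue of the Schreier Laplacian L_n(w). -/
open Matrix Finset

attribute [local instance] Classical.propDecidable

noncomputable def graphLap (N : ℕ) (G : SimpleGraph (Fin N)) (w : Fin N → Fin N → ℝ) :
    Matrix (Fin N) (Fin N) ℝ :=
  Matrix.of fun i j =>
    if i = j then ∑ k, (if G.Adj i k then w i k else 0)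
    else if G.Adj i j then -w i j else 0

abbrev Vcomp (N K : ℕ) (n : Fin K → ℕ) : Type :=
  {f : Fin N → Fin K // ∀ k, (Finset.univ.filter fun i => f i = k).card = n k}

noncomputable def schLap (N K : ℕ) (G : SimpleGraph (Fin N)) (n : Fin K → ℕ)
    (w : Fin N → Fin N → ℝ) : Matrix (Vcomp N K n) (Vcomp N K n) ℝ :=
  Matrix.of fun f g => ∑ i, ∑ j,
    if i < j ∧ G.Adj i j then
      w i j * ((if g = f then 1 else 0) -
        (if (g : Fin N → Fin K) = (f : Fin N → Fin K) ∘ (Equiv.swap i j) then 1 else 0))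
    else 0

lemma spec_iff {ι : Type*} [Fintype ι] [DecidableEq ι] (A : Matrix ι ι ℝ) (μ : ℝ) :
    μ ∈ spectrum ℝ A ↔ ∃ v ≠ (0 : ι → ℝ), A *ᵥ v = μ • v := by
  have key : ∀ v : ι → ℝ, ((algebraMap ℝ (Matrix ι ι ℝ)) μ - A) *ᵥ v = μ • v - A *ᵥ v := by
    intro v
    rw [Matrix.sub_mulVec, Algebra.algebraMap_eq_smul_one, Matrix.smul_mulVec,
      Matrix.one_mulVec]
  rw [spectrum.mem_iff, Matrix.isUnit_iff_isUnit_det, isUnit_iff_ne_zero, not_ne_iff,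
    ← Matrix.exists_mulVec_eq_zero_iff]
  constructor
  · rintro ⟨v, hv, h⟩
    exact ⟨v, hv, by rw [key] at h; exact (sub_eq_zero.mp h).symm⟩
  · rintro ⟨v, hv, h⟩
    exact ⟨v, hv, by rw [key, h, sub_self]⟩

lemma filter_comp_perm {N K : ℕ} (f : Fin N → Fin K) (σ : Equiv.Perm (Fin N)) (k : Fin K) :
    (Finset.univ.filter fun i => f (σ i) = k).card
      = (Finset.univ.filter fun i => f i = k).card := by
  apply Finset.card_bij (fun a _ => σ a)
  · intro a ha; simp only [mem_filter, mem_univ, true_and] at ha ⊢; exact ha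
  · intro a _ b _ h; exact σ.injective h
  · intro b hb
    refine ⟨σ.symm b, ?_, by simp⟩
    simp only [mem_filter, mem_univ, true_and, Equiv.apply_symm_apply] at hb ⊢
    exact hb

lemma exists_base {N K : ℕ} (n : Fin K → ℕ) (hsum : ∑ k, n k = N) :
    ∃ f : Fin N → Fin K, ∀ k, (Finset.univ.filter fun i => f i = k).card = n k := by
  have hcard : Fintype.card (Σ k : Fin K, Fin (n k)) = Fintype.card (Fin N) := by
    simp [hsum]
  let e : (Σ k : Fin K, Fin (n k)) ≃ Fin N := Fintype.equivOfCardEq hcard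
  refine ⟨fun i => (e.symm i).1, fun k => ?_⟩
  have h1 : (Finset.univ.filter fun i => (e.symm i).1 = k).card
      = Fintype.card {i : Fin N // (e.symm i).1 = k} := (Fintype.card_subtype _).symm
  rw [h1]
  have e2 : {i : Fin N // (e.symm i).1 = k} ≃ {s : Σ k', Fin (n k') // s.1 = k} :=
    Equiv.subtypeEquiv e.symm (fun _ => Iff.rfl)
  have e3 : Fin (n k) ≃ {s : Σ k', Fin (n k') // s.1 = k} := by
    refine Equiv.ofBijective (fun a => ⟨⟨k, a⟩, rfl⟩) ⟨?_, ?_⟩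
    · intro a b h
      have h2 : (⟨k,a⟩ : Σ k', Fin (n k')) = ⟨k,b⟩ := congrArg Subtype.val h
      exact eq_of_heq (Sigma.mk.inj_iff.mp h2).2
    · rintro ⟨⟨k', a⟩, h⟩
      simp only at h
      subst h
      exact ⟨a, rfl⟩
  rw [Fintype.card_congr e2, ← Fintype.card_congr e3, Fintype.card_fin]

lemma xdiff {N K : ℕ} (v : Fin N → ℝ) (k0 : Fin K) (f : Fin N → Fin K) (i j : Fin N)
    (hij : i ≠ j) :
    (∑ a, (if f a = k0 then (1:ℝ) else 0) * v a)
      - (∑ a, (if f (Equiv.swap i j a) = k0 then (1:ℝ) else 0) * v a)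
    = ((if f i = k0 then (1:ℝ) else 0) - (if f j = k0 then 1 else 0)) * (v i - v j) := by
  rw [← Finset.sum_sub_distrib]
  have hpt : ∀ a, (if f a = k0 then (1:ℝ) else 0) * v a
      - (if f (Equiv.swap i j a) = k0 then (1:ℝ) else 0) * v a
      = ((if f a = k0 then (1:ℝ) else 0)
          - (if f (Equiv.swap i j a) = k0 then (1:ℝ) else 0)) * v a := by
    intro a; ring
  simp_rw [hpt]
  rw [← Finset.sum_subset (Finset.subset_univ ({i, j} : Finset (Fin N)))
    (by
      intro a _ ha
      rw [Equiv.swap_apply_of_ne_of_ne (fun h => ha (by simp [h]))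
        (fun h => ha (by simp [h]))]
      ring)]
  rw [Finset.sum_pair hij, Equiv.swap_apply_left, Equiv.swap_apply_right]
  ring

lemma pair_sum {N : ℕ} (F : Fin N → Fin N → ℝ) (h0 : ∀ i, F i i = 0) :
    ∑ i, ∑ j, (if i < j then F i j + F j i else 0) = ∑ i, ∑ j, F i j := by
  have split : ∀ i j : Fin N, (if i < j then F i j + F j i else 0)
      = (if i < j then F i j else 0) + (if i < j then F j i else 0) := by
    intro i j; split <;> simp
  simp_rw [split, Finset.sum_add_distrib]
  have h2 : (∑ i, ∑ j, if i < j then F j i else 0)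
      = ∑ i, ∑ j, if j < i then F i j else 0 := Finset.sum_comm
  rw [h2, ← Finset.sum_add_distrib]
  simp_rw [← Finset.sum_add_distrib]
  congr 1; funext i; congr 1; funext j
  rcases lt_trichotomy i j with h | h | h
  · simp [h, asymm h]
  · simp [h, h0 j]
  · simp [h, asymm h, not_lt_of_gt h]

lemma lap_apply (N : ℕ) (G : SimpleGraph (Fin N)) (w : Fin N → Fin N → ℝ)
    (v : Fin N → ℝ) (i : Fin N) :
    (graphLap N G w *ᵥ v) i = ∑ j, (if G.Adj i j then w i j * (v i - v j) else 0) := by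
  rw [Matrix.mulVec, dotProduct]
  have hpt : ∀ j, graphLap N G w i j * v j
      = (if j = i then (∑ k, (if G.Adj i k then w i k else 0)) * v i else 0)
        + (if G.Adj i j then -(w i j * v j) else 0) := by
    intro j
    simp only [graphLap, Matrix.of_apply]
    by_cases h : i = j
    · subst h; simp [G.irrefl]
    · rw [if_neg h, if_neg (Ne.symm h), zero_add]
      split <;> ring
  simp_rw [hpt, Finset.sum_add_distrib, Finset.sum_ite_eq' Finset.univ i
    (fun _ => (∑ k, (if G.Adj i k then w i k else 0)) * v i), if_pos (Finset.mem_univ i),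
    Finset.sum_mul]
  rw [← Finset.sum_add_distrib]
  congr 1; funext j
  split <;> ring

/-- Every eigenvalue of the weighted graph Laplacian is an eigenvalue of the
Schreier Laplacian, for any composition of `N` with at least two parts. -/
theorem graphLap_spectrum_subset_schLap_spectrum (N K : ℕ) (hN : 2 ≤ N) (hK : 2 ≤ K)
    (G : SimpleGraph (Fin N))
    (w : Fin N → Fin N → ℝ) (hsym : ∀ i j, w i j = w j i)
    (n : Fin K → ℕ) (hparts : ∀ k, 0 < n k) (hsum : ∑ k, n k = N) :
    ∀ μ : ℝ, μ ∈ spectrum ℝ (graphLap N G w) → μ ∈ spectrum ℝ (schLap N K G n w) := by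
  intro μ hμ
  obtain ⟨v, hv0, hev⟩ := (spec_iff _ μ).mp hμ
  have k0 : Fin K := ⟨0, by omega⟩
  -- the lifted vector
  set χ : Fin K → ℝ := fun c => if c = (⟨0, by omega⟩ : Fin K) then (1:ℝ) else 0 with hχ
  set k₀ : Fin K := ⟨0, by omega⟩ with hk₀
  let x : Vcomp N K n → ℝ := fun f => ∑ a, (if (f : Fin N → Fin K) a = k₀ then (1:ℝ) else 0) * v a
  -- swapped vertex
  let sw : Vcomp N K n → Fin N → Fin N → Vcomp N K n := fun f i j =>
    ⟨(f : Fin N → Fin K) ∘ Equiv.swap i j,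
      fun k => (filter_comp_perm (f : Fin N → Fin K) (Equiv.swap i j) k).trans (f.2 k)⟩
  -- Step 1: mulVec formula
  have step1 : ∀ f : Vcomp N K n, (schLap N K G n w *ᵥ x) f
      = ∑ i, ∑ j, if i < j ∧ G.Adj i j then w i j * (x f - x (sw f i j)) else 0 := by
    intro f
    rw [Matrix.mulVec, dotProduct]
    simp only [schLap, Matrix.of_apply]
    simp_rw [Finset.sum_mul]
    rw [Finset.sum_comm]
    refine Finset.sum_congr rfl fun i _ => ?_
    rw [Finset.sum_comm]
    refine Finset.sum_congr rfl fun j _ => ?_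
    by_cases hP : i < j ∧ G.Adj i j
    · simp only [if_pos hP]
      have hcond : ∀ g : Vcomp N K n,
          ((g : Fin N → Fin K) = (f : Fin N → Fin K) ∘ Equiv.swap i j) ↔ g = sw f i j := by
        intro g
        constructor
        · intro h; exact Subtype.ext h
        · intro h; exact congrArg Subtype.val h
      simp_rw [hcond]
      have hpt : ∀ g : Vcomp N K n,
          w i j * ((if g = f then (1:ℝ) else 0) - (if g = sw f i j then 1 else 0)) * x g
          = w i j * ((if g = f then x g else 0) - (if g = sw f i j then x g else 0)) := by
        intro g; split <;> split <;> ring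
      simp_rw [hpt]
      rw [← Finset.mul_sum, Finset.sum_sub_distrib,
        Finset.sum_ite_eq' Finset.univ f x, Finset.sum_ite_eq' Finset.univ (sw f i j) x,
        if_pos (Finset.mem_univ _), if_pos (Finset.mem_univ _)]
    · simp [hP]
  -- the eigen equation
  have heig : schLap N K G n w *ᵥ x = μ • x := by
    funext f
    rw [step1 f]
    have hx : ∀ i j : Fin N, i ≠ j →
        x f - x (sw f i j)
        = ((if (f : Fin N → Fin K) i = k₀ then (1:ℝ) else 0)
            - (if (f : Fin N → Fin K) j = k₀ then 1 else 0)) * (v i - v j) :=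
      fun i j hij => xdiff v k₀ (f : Fin N → Fin K) i j hij
    -- rewrite into symmetrized form
    have hmid : (∑ i, ∑ j, if i < j ∧ G.Adj i j then w i j * (x f - x (sw f i j)) else 0)
        = ∑ i, ∑ j, (if i < j then
            (if G.Adj i j then w i j * (v i - v j) *
              (if (f : Fin N → Fin K) i = k₀ then (1:ℝ) else 0) else 0)
            + (if G.Adj j i then w j i * (v j - v i) *
              (if (f : Fin N → Fin K) j = k₀ then (1:ℝ) else 0) else 0)
          else 0) := by
      refine Finset.sum_congr rfl fun i _ => Finset.sum_congr rfl fun j _ => ?_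
      by_cases hlt : i < j
      · have hij : i ≠ j := ne_of_lt hlt
        by_cases hadj : G.Adj i j
        · rw [if_pos ⟨hlt, hadj⟩, if_pos hlt, if_pos hadj, if_pos (G.adj_symm hadj),
            hx i j hij, hsym j i]
          ring
        · rw [if_neg (by tauto), if_pos hlt, if_neg hadj,
            if_neg (fun h => hadj (G.adj_symm h)), add_zero]
      · rw [if_neg (by tauto), if_neg hlt]
    rw [hmid, pair_sum (fun i j => if G.Adj i j then w i j * (v i - v j) *
        (if (f : Fin N → Fin K) i = k₀ then (1:ℝ) else 0) else 0)
      (fun i => by simp [G.irrefl])]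
    have hfac : ∀ i : Fin N, (∑ j, if G.Adj i j then w i j * (v i - v j) *
        (if (f : Fin N → Fin K) i = k₀ then (1:ℝ) else 0) else 0)
        = (∑ j, if G.Adj i j then w i j * (v i - v j) else 0) *
          (if (f : Fin N → Fin K) i = k₀ then (1:ℝ) else 0) := by
      intro i
      rw [Finset.sum_mul]
      refine Finset.sum_congr rfl fun j _ => ?_
      split <;> ring
    simp_rw [hfac]
    have hLv : ∀ i, (∑ j, if G.Adj i j then w i j * (v i - v j) else 0) = μ * v i := by
      intro i
      rw [← lap_apply N G w v i, hev]
      simp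
    simp_rw [hLv]
    rw [Pi.smul_apply, smul_eq_mul]
    show _ = μ * x f
    rw [Finset.mul_sum]
    refine Finset.sum_congr rfl fun i _ => ?_
    ring
  refine (spec_iff _ μ).mpr ⟨x, ?_, heig⟩
  -- nonvanishing
  intro hx0
  have hzero : ∀ f : Vcomp N K n, x f = 0 := fun f => congrFun hx0 f
  -- base coloring
  obtain ⟨f0v, hf0⟩ := exists_base n hsum
  set f0 : Vcomp N K n := ⟨f0v, hf0⟩ with hf0def
  set k₁ : Fin K := ⟨1, by omega⟩ with hk₁
  have hk01 : k₀ ≠ k₁ := by simp [hk₀, hk₁, Fin.ext_iff]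
  -- v is constant across the k₀ boundary
  have hvc : ∀ (f : Vcomp N K n) (i j : Fin N),
      (f : Fin N → Fin K) i = k₀ → (f : Fin N → Fin K) j ≠ k₀ → v i = v j := by
    intro f i j hi hj
    have hij : i ≠ j := fun h => hj (h ▸ hi)
    have h1 : x f - x (sw f i j)
        = ((if (f : Fin N → Fin K) i = k₀ then (1:ℝ) else 0)
            - (if (f : Fin N → Fin K) j = k₀ then 1 else 0)) * (v i - v j) :=
      xdiff v k₀ (f : Fin N → Fin K) i j hij
    rw [hzero f, hzero (sw f i j), if_pos hi, if_neg hj] at h1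
    linarith [h1]
  -- fibers are nonempty
  have hfib : ∀ k : Fin K, ∃ i, f0v i = k := by
    intro k
    have : (Finset.univ.filter fun i => f0v i = k).card = n k := hf0 k
    have hpos : 0 < (Finset.univ.filter fun i => f0v i = k).card := this ▸ hparts k
    obtain ⟨i, hi⟩ := Finset.card_pos.mp hpos
    exact ⟨i, (Finset.mem_filter.mp hi).2⟩
  obtain ⟨i0, hi0⟩ := hfib k₀
  obtain ⟨j0, hj0⟩ := hfib k₁
  have hj0' : f0v j0 ≠ k₀ := by rw [hj0]; exact (Ne.symm hk01)
  -- v is constant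
  have hconst : ∀ a, v a = v j0 := by
    intro a
    by_cases ha : f0v a = k₀
    · exact hvc f0 a j0 ha hj0'
    · by_cases haj : a = j0
      · rw [haj]
      · have hai : a ≠ i0 := fun h => ha (by rw [h]; exact hi0)
        -- use f1 = f0 ∘ swap i0 a : then a has color k₀, j0 keeps its color
        have h1 : ((sw f0 i0 a : Vcomp N K n) : Fin N → Fin K) a = k₀ := by
          show f0v (Equiv.swap i0 a a) = k₀
          rw [Equiv.swap_apply_right]; exact hi0
        have h2 : ((sw f0 i0 a : Vcomp N K n) : Fin N → Fin K) j0 ≠ k₀ := by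
          show f0v (Equiv.swap i0 a j0) ≠ k₀
          rw [Equiv.swap_apply_of_ne_of_ne (fun h => hj0' (by rw [h]; exact hi0)) (Ne.symm haj)]
          exact hj0'
        exact hvc (sw f0 i0 a) a j0 h1 h2
  -- conclude x f0 = n k₀ * v j0 = 0, so v = 0
  have hxf0 : x f0 = (n k₀ : ℝ) * v j0 := by
    show (∑ a, (if f0v a = k₀ then (1:ℝ) else 0) * v a) = (n k₀ : ℝ) * v j0
    have : ∀ a, (if f0v a = k₀ then (1:ℝ) else 0) * v a
        = (if f0v a = k₀ then (1:ℝ) else 0) * v j0 := by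
      intro a; rw [hconst a]
    simp_rw [this]
    rw [← Finset.sum_mul]
    congr 1
    rw [Finset.sum_ite, Finset.sum_const, Finset.sum_const]
    simp [hf0 k₀]
  have hv0' : v j0 = 0 := by
    have h := hzero f0
    rw [hxf0] at h
    rcases mul_eq_zero.mp h with h' | h'
    · exact absurd h' (Nat.cast_ne_zero.mpr (hparts k₀).ne')
    · exact h'
  apply hv0
  funext a
  rw [Pi.zero_apply, hconst a, hv0']
end

section
/- Let G be a simple graph on the vertex set Fin N (N ≥ 2) with real edge weights w and total weight W = Σ_{{i,j} ∈ E} w_{ij}, and let D be the diagonal N!×N! matrix indexed by S_N with D_{σσ} = sgn(σ). Then D · L_reg(w) · D = 2W·I − L_reg(w). Consequently, for every real λ and every m, λ is an eigenvalue of the interchange Laplacian L_reg(w) with multiplicity m if and only if 2W − λ is an eigenvalue of L_reg(w) with multiplicity m; i.e., the spectrum of the interchange Laplacian is symmetric about W. -/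
open Matrix Finset

attribute [local instance] Classical.propDecidable

/-- Total weight of a weighted graph on `Fin N`. -/
noncomputable def totalW (N : ℕ) (G : SimpleGraph (Fin N)) (w : Fin N → Fin N → ℝ) : ℝ :=
  ∑ i, ∑ j, if i < j ∧ G.Adj i j then w i j else 0

/-- The interchange Laplacian `L_reg(w)`, indexed by the symmetric group on `Fin N`. -/
noncomputable def interLap (N : ℕ) (G : SimpleGraph (Fin N)) (w : Fin N → Fin N → ℝ) :
    Matrix (Equiv.Perm (Fin N)) (Equiv.Perm (Fin N)) ℝ :=
  Matrix.of fun σ π => ∑ i, ∑ j,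
    if i < j ∧ G.Adj i j then
      w i j * ((if π = σ then 1 else 0) - (if π = σ * Equiv.swap i j then 1 else 0))
    else 0

/-- Multiset of eigenvalues (with multiplicity) of a real symmetric matrix. -/
noncomputable def eigs {m : Type*} [Fintype m] [DecidableEq m] (M : Matrix m m ℝ) : Multiset ℝ :=
  if h : M.IsHermitian then Finset.univ.val.map h.eigenvalues else 0

section Aux

open Polynomial

lemma signR_mul_self {N : ℕ} (σ : Equiv.Perm (Fin N)) :
    ((Equiv.Perm.sign σ : ℤ) : ℝ) * ((Equiv.Perm.sign σ : ℤ) : ℝ) = 1 := by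
  rcases Int.units_eq_one_or (Equiv.Perm.sign σ) with h | h <;> rw [h] <;> norm_num

lemma charpoly_conj_aux {m : Type*} [Fintype m] [DecidableEq m] (P Q A : Matrix m m ℝ)
    (hPQ : P * Q = 1) : (P * A * Q).charpoly = A.charpoly := by
  have hcm : charmatrix (P * A * Q) =
      P.map Polynomial.C * charmatrix A * Q.map Polynomial.C := by
    have h1 : (P.map (Polynomial.C (R := ℝ))) * (Q.map Polynomial.C) = 1 := by
      rw [← Matrix.map_mul, hPQ, Matrix.map_one _ (map_zero _) (map_one _)]
    rw [charmatrix, charmatrix]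
    have hscal : Matrix.scalar m (Polynomial.X (R := ℝ)) = (Polynomial.X (R := ℝ)) • 1 := by
      simp [Matrix.scalar, Matrix.smul_one_eq_diagonal]
    rw [hscal]
    rw [Matrix.mul_sub, Matrix.sub_mul, Matrix.mul_smul, mul_one, Matrix.smul_mul, h1]
    congr 1
    simp only [RingHom.mapMatrix_apply]
    rw [← Matrix.map_mul, ← Matrix.map_mul]
  have h1 : (P.map (Polynomial.C (R := ℝ))) * (Q.map Polynomial.C) = 1 := by
    rw [← Matrix.map_mul, hPQ, Matrix.map_one _ (map_zero _) (map_one _)]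
  rw [Matrix.charpoly, Matrix.charpoly, hcm, Matrix.det_mul, Matrix.det_mul]
  have : (P.map (Polynomial.C (R := ℝ))).det * (Q.map Polynomial.C).det = 1 := by
    rw [← Matrix.det_mul, h1, Matrix.det_one]
  calc (P.map Polynomial.C).det * (charmatrix A).det * (Q.map Polynomial.C).det
      = ((P.map Polynomial.C).det * (Q.map Polynomial.C).det) * (charmatrix A).det := by ring
    _ = (charmatrix A).det := by rw [this, one_mul]

lemma charpoly_diagonal {m : Type*} [Fintype m] [DecidableEq m] (d : m → ℝ) :
    (Matrix.diagonal d).charpoly = ∏ i, (Polynomial.X - Polynomial.C (d i)) := by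
  have : charmatrix (Matrix.diagonal d) =
      Matrix.diagonal (fun i => Polynomial.X - Polynomial.C (d i)) := by
    ext i j
    by_cases h : i = j
    · subst h; simp [charmatrix_apply]
    · simp [charmatrix_apply_ne _ _ _ h, Matrix.diagonal_apply_ne _ h, Matrix.diagonal_apply_ne d h]
  rw [Matrix.charpoly, this, Matrix.det_diagonal]

lemma roots_charpoly_diag_conj {m : Type*} [Fintype m] [DecidableEq m]
    (P Q : Matrix m m ℝ) (d : m → ℝ) (hPQ : P * Q = 1) :
    (P * Matrix.diagonal d * Q).charpoly.roots = Finset.univ.val.map d := by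
  rw [charpoly_conj_aux P Q _ hPQ, _root_.charpoly_diagonal]
  have : (∏ i, (Polynomial.X - Polynomial.C (d i))) =
      ((Finset.univ.val.map d).map (fun a => Polynomial.X - Polynomial.C a)).prod := by
    rw [Multiset.map_map]
    rfl
  rw [this, Polynomial.roots_multiset_prod_X_sub_C]

lemma eigs_eq_roots {m : Type*} [Fintype m] [DecidableEq m] {M : Matrix m m ℝ}
    (h : M.IsHermitian) : eigs M = M.charpoly.roots := by
  rw [eigs, dif_pos h]
  set U : Matrix m m ℝ := (Matrix.IsHermitian.eigenvectorUnitary h : Matrix m m ℝ) with hU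
  have hUmem := (Matrix.IsHermitian.eigenvectorUnitary h).2
  have hPQ : U * star U = 1 := (Matrix.mem_unitaryGroup_iff).mp hUmem
  have hM : M = U * Matrix.diagonal h.eigenvalues * star U := by
    have := h.spectral_theorem
    simpa [RCLike.ofReal_real_eq_id] using this
  conv_rhs => rw [hM]
  rw [roots_charpoly_diag_conj U (star U) _ hPQ]

lemma eigs_shift_reflect {m : Type*} [Fintype m] [DecidableEq m] {M : Matrix m m ℝ}
    (h : M.IsHermitian) (c : ℝ) :
    (c • (1 : Matrix m m ℝ) - M).charpoly.roots =
      (eigs M).map (fun x => c - x) := by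
  set U : Matrix m m ℝ := (Matrix.IsHermitian.eigenvectorUnitary h : Matrix m m ℝ) with hU
  have hUmem := (Matrix.IsHermitian.eigenvectorUnitary h).2
  have hPQ : U * star U = 1 := (Matrix.mem_unitaryGroup_iff).mp hUmem
  have hM : M = U * Matrix.diagonal h.eigenvalues * star U := by
    have := h.spectral_theorem
    simpa [RCLike.ofReal_real_eq_id] using this
  have hdiag : Matrix.diagonal (fun i => c - h.eigenvalues i) =
      c • (1 : Matrix m m ℝ) - Matrix.diagonal h.eigenvalues := by
    ext i j
    by_cases hij : i = j
    · subst hij; simp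
    · simp [Matrix.diagonal_apply_ne _ hij, Matrix.one_apply_ne hij]
  have hB : c • (1 : Matrix m m ℝ) - M =
      U * Matrix.diagonal (fun i => c - h.eigenvalues i) * star U := by
    rw [hdiag, Matrix.mul_sub, Matrix.sub_mul]
    conv_lhs => rw [hM]
    congr 1
    rw [Matrix.mul_smul, mul_one, Matrix.smul_mul, hPQ]
  rw [hB, roots_charpoly_diag_conj U (star U) _ hPQ, eigs, dif_pos h, Multiset.map_map]
  rfl

end Aux

lemma interLap_isHermitian (N : ℕ) (G : SimpleGraph (Fin N)) (w : Fin N → Fin N → ℝ) :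
    (interLap N G w).IsHermitian := by
  ext σ π
  simp only [Matrix.conjTranspose_apply, interLap, Matrix.of_apply, star_trivial]
  refine Finset.sum_congr rfl fun i _ => Finset.sum_congr rfl fun j _ => ?_
  by_cases hc : i < j ∧ G.Adj i j
  · rw [if_pos hc, if_pos hc]
    have h1 : (σ = π) ↔ (π = σ) := eq_comm
    have h2 : (σ = π * Equiv.swap i j) ↔ (π = σ * Equiv.swap i j) := by
      constructor <;> intro h <;>
        rw [h, mul_assoc, Equiv.swap_mul_self, mul_one]
    simp only [h1, h2]
  · rw [if_neg hc, if_neg hc]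

/-- Conjugating the interchange Laplacian by the diagonal sign matrix gives
`2W·I − L_reg(w)`; consequently its spectrum is symmetric about `W`,
multiplicities included. -/
theorem interLap_sign_conjugation_and_spectrum_symmetry (N : ℕ) (hN : 2 ≤ N)
    (G : SimpleGraph (Fin N))
    (w : Fin N → Fin N → ℝ) (hsym : ∀ i j, w i j = w j i) :
    (Matrix.diagonal (fun σ : Equiv.Perm (Fin N) => ((Equiv.Perm.sign σ : ℤ) : ℝ)) *
        interLap N G w *
        Matrix.diagonal (fun σ : Equiv.Perm (Fin N) => ((Equiv.Perm.sign σ : ℤ) : ℝ)) =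
      (2 * totalW N G w) • (1 : Matrix (Equiv.Perm (Fin N)) (Equiv.Perm (Fin N)) ℝ) -
        interLap N G w) ∧
    ∀ (lam : ℝ) (m : ℕ),
      Multiset.count lam (eigs (interLap N G w)) = m ↔
        Multiset.count (2 * totalW N G w - lam) (eigs (interLap N G w)) = m := by
  set d : Equiv.Perm (Fin N) → ℝ := fun σ => ((Equiv.Perm.sign σ : ℤ) : ℝ) with hd
  have hconj : Matrix.diagonal d * interLap N G w * Matrix.diagonal d =
      (2 * totalW N G w) • (1 : Matrix (Equiv.Perm (Fin N)) (Equiv.Perm (Fin N)) ℝ) -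
        interLap N G w := by
    ext σ π
    rw [Matrix.mul_diagonal, Matrix.diagonal_mul, Matrix.sub_apply, Matrix.smul_apply,
      Matrix.one_apply, smul_eq_mul]
    simp only [interLap, Matrix.of_apply]
    have key : ∀ i j : Fin N,
        d σ * ((if i < j ∧ G.Adj i j then
          w i j * ((if π = σ then 1 else 0) - (if π = σ * Equiv.swap i j then 1 else 0))
          else 0)) * d π =
        2 * (if i < j ∧ G.Adj i j then w i j else 0) * (if σ = π then 1 else 0) -
        (if i < j ∧ G.Adj i j then
          w i j * ((if π = σ then 1 else 0) - (if π = σ * Equiv.swap i j then 1 else 0))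
          else 0) := by
      intro i j
      by_cases hc : i < j ∧ G.Adj i j
      · simp only [if_pos hc]
        have hij : i ≠ j := ne_of_lt hc.1
        by_cases ha : π = σ
        · subst ha
          have hb : ¬ (π = π * Equiv.swap i j) := by
            rw [left_eq_mul]
            simpa using hij
          simp only [if_neg hb, eq_self_iff_true, if_true]
          simp only [hd]
          linear_combination (w i j) * (signR_mul_self π)
        · have hσπ : ¬ (σ = π) := fun h => ha h.symm
          by_cases hb : π = σ * Equiv.swap i j
          · have hsgn : d π = -d σ := by
              simp only [hd, hb, _root_.map_mul, Equiv.Perm.sign_swap hij]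
              push_cast
              ring
            simp only [if_neg ha, if_pos hb, if_neg hσπ, hsgn]
            simp only [hd]
            linear_combination (w i j) * (signR_mul_self σ)
          · simp only [if_neg ha, if_neg hb, if_neg hσπ]
            ring
      · simp only [if_neg hc]
        ring
    calc d σ * (∑ i, ∑ j, (if i < j ∧ G.Adj i j then
          w i j * ((if π = σ then 1 else 0) - (if π = σ * Equiv.swap i j then 1 else 0))
          else 0)) * d π
        = ∑ i, ∑ j, d σ * ((if i < j ∧ G.Adj i j then
          w i j * ((if π = σ then 1 else 0) - (if π = σ * Equiv.swap i j then 1 else 0))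
          else 0)) * d π := by
          simp only [Finset.mul_sum, Finset.sum_mul]
      _ = ∑ i, ∑ j, (2 * (if i < j ∧ G.Adj i j then w i j else 0) * (if σ = π then 1 else 0) -
          (if i < j ∧ G.Adj i j then
            w i j * ((if π = σ then 1 else 0) - (if π = σ * Equiv.swap i j then 1 else 0))
            else 0)) := by
          exact Finset.sum_congr rfl fun i _ => Finset.sum_congr rfl fun j _ => key i j
      _ = 2 * totalW N G w * (if σ = π then 1 else 0) -
          ∑ i, ∑ j, (if i < j ∧ G.Adj i j then
            w i j * ((if π = σ then 1 else 0) - (if π = σ * Equiv.swap i j then 1 else 0))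
            else 0) := by
          simp only [Finset.sum_sub_distrib]
          congr 1
          rw [totalW]
          simp only [Finset.mul_sum, Finset.sum_mul]
  refine ⟨hconj, ?_⟩
  have hherm := interLap_isHermitian N G w
  set W := totalW N G w
  set L := interLap N G w
  have hDD : Matrix.diagonal d * Matrix.diagonal d = 1 := by
    rw [Matrix.diagonal_mul_diagonal]
    have : (fun σ => d σ * d σ) = fun _ : Equiv.Perm (Fin N) => (1 : ℝ) :=
      funext fun σ => signR_mul_self σ
    rw [this, Matrix.diagonal_one]
  have hroots : L.charpoly.roots = (Matrix.diagonal d * L * Matrix.diagonal d).charpoly.roots :=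
    (congrArg Polynomial.roots (charpoly_conj_aux _ _ L hDD)).symm
  have hmain : eigs L = (eigs L).map (fun x => 2 * W - x) := by
    calc eigs L
        = L.charpoly.roots := eigs_eq_roots hherm
      _ = (Matrix.diagonal d * L * Matrix.diagonal d).charpoly.roots := hroots
      _ = ((2 * W) • (1 : Matrix (Equiv.Perm (Fin N)) (Equiv.Perm (Fin N)) ℝ) - L).charpoly.roots := by
          rw [hconj]
      _ = (eigs L).map (fun x => 2 * W - x) := eigs_shift_reflect hherm (2 * W)
  intro lam m
  have hinj : Function.Injective (fun x : ℝ => 2 * W - x) := fun a b h => by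
    simpa using sub_right_injective h
  have hcount : Multiset.count (2 * W - lam) (eigs L) = Multiset.count lam (eigs L) := by
    conv_lhs => rw [hmain]
    exact Multiset.count_map_eq_count' _ _ hinj lam
  rw [hcount]
end

section
/- Let K_N be the complete graph on N ≥ 2 vertices. For every real weight function w on its edges, max{ 1 − λ_2(L_G(w)), 2W − 1 } ≥ (N−2)/N, and equality holds when every edge carries the weight 2/N². In other words, the optimal SLEM of the fastest discrete-time quantum consensus problem on the complete graph (case N ≤ d²) equals (N−2)/N, attained at uniform edge weight 2/N². -/
open Matrix Finset

attribute [local instance] Classical.propDecidable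

/-- The second smallest eigenvalue (with multiplicity) of a real symmetric matrix. -/
noncomputable def lambda2 {m : Type*} [Fintype m] [DecidableEq m] (M : Matrix m m ℝ) : ℝ :=
  ((eigs M).sort (· ≤ ·)).getD 1 0


section helpers

lemma list_sum_ge (b : ℝ) : ∀ (t : List ℝ), (∀ x ∈ t, b ≤ x) → (t.length : ℝ) * b ≤ t.sum := by
  intro t
  induction t with
  | nil => simp
  | cons a t ih =>
    intro h
    have h1 := h a (List.mem_cons_self)
    have h2 := ih (fun x hx => h x (List.mem_cons_of_mem a hx))
    simp only [List.length_cons, List.sum_cons]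
    push_cast
    nlinarith

lemma list_sum_le (b : ℝ) : ∀ (t : List ℝ), (∀ x ∈ t, x ≤ b) → t.sum ≤ (t.length : ℝ) * b := by
  intro t
  induction t with
  | nil => simp
  | cons a t ih =>
    intro h
    have h1 := h a (List.mem_cons_self)
    have h2 := ih (fun x hx => h x (List.mem_cons_of_mem a hx))
    simp only [List.length_cons, List.sum_cons]
    push_cast
    nlinarith

lemma sym_sum {N : ℕ} (w : Fin N → Fin N → ℝ) (hw : ∀ i j, w i j = w j i) :
    (∑ i, ∑ j, if i ≠ j then w i j else 0)
      = 2 * ∑ i, ∑ j, (if i < j then w i j else 0) := by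
  have h1 : ∀ i j : Fin N, (if i ≠ j then w i j else 0)
      = (if i < j then w i j else 0) + (if j < i then w i j else 0) := by
    intro i j
    rcases lt_trichotomy i j with h | h | h
    · simp [h, h.ne, h.asymm]
    · simp [h]
    · simp [h, h.ne', h.asymm]
  calc (∑ i, ∑ j, if i ≠ j then w i j else 0)
      = ∑ i, ∑ j, ((if i < j then w i j else 0) + (if j < i then w i j else 0)) := by
        refine Finset.sum_congr rfl fun i _ => Finset.sum_congr rfl fun j _ => h1 i j
    _ = (∑ i, ∑ j, (if i < j then w i j else 0)) + ∑ i, ∑ j, (if j < i then w i j else 0) := by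
        rw [← Finset.sum_add_distrib]
        exact Finset.sum_congr rfl fun i _ => Finset.sum_add_distrib
    _ = 2 * ∑ i, ∑ j, (if i < j then w i j else 0) := by
        have : (∑ i, ∑ j, if j < i then w i j else 0)
            = ∑ i : Fin N, ∑ j, (if i < j then w i j else 0) := by
          rw [Finset.sum_comm]
          refine Finset.sum_congr rfl fun i _ => Finset.sum_congr rfl fun j _ => ?_
          by_cases h : i < j
          · simp [h, hw i j]
          · simp [h]
        rw [this]; ring

end helpers

section lap

variable {N : ℕ}

lemma graphLap_isHermitian (w : Fin N → Fin N → ℝ) (hw : ∀ i j, w i j = w j i) :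
    (graphLap N ⊤ w).IsHermitian := by
  ext i j
  simp only [conjTranspose_apply, graphLap, Matrix.of_apply, star_trivial]
  by_cases h : i = j
  · subst h; simp
  · simp only [h, Ne.symm h, if_neg, SimpleGraph.top_adj, ne_eq, not_false_eq_true, if_true,
      not_true, if_false]
    rw [hw j i]

lemma graphLap_trace (w : Fin N → Fin N → ℝ) :
    (graphLap N ⊤ w).trace = ∑ i, ∑ j, (if i ≠ j then w i j else 0) := by
  rw [Matrix.trace]
  refine Finset.sum_congr rfl fun i _ => ?_
  simp only [Matrix.diag_apply, graphLap, Matrix.of_apply, if_pos rfl, SimpleGraph.top_adj]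
  refine Finset.sum_congr rfl fun j _ => ?_
  by_cases h : i = j <;> simp [h, Ne.symm]

lemma totalW_top (w : Fin N → Fin N → ℝ) :
    totalW N ⊤ w = ∑ i, ∑ j, (if i < j then w i j else 0) := by
  rw [totalW]
  refine Finset.sum_congr rfl fun i _ => Finset.sum_congr rfl fun j _ => ?_
  by_cases h : i < j
  · simp [h, h.ne, SimpleGraph.top_adj]
  · simp [h]

lemma trace_eq_two_totalW (w : Fin N → Fin N → ℝ) (hw : ∀ i j, w i j = w j i) :
    (graphLap N ⊤ w).trace = 2 * totalW N ⊤ w := by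
  rw [graphLap_trace, totalW_top, sym_sum w hw]

lemma graphLap_rowsum (w : Fin N → Fin N → ℝ) (i : Fin N) :
    ∑ j, graphLap N ⊤ w i j = 0 := by
  have hD : graphLap N ⊤ w i i = ∑ k, (if i ≠ k then w i k else 0) := by
    simp [graphLap, SimpleGraph.top_adj]
  have hsplit : ∀ j : Fin N, graphLap N ⊤ w i j
      = (if i = j then graphLap N ⊤ w i i else 0) + (if i ≠ j then -w i j else 0) := by
    intro j
    by_cases h : i = j
    · subst h; simp
    · simp [graphLap, h, SimpleGraph.top_adj]
  calc ∑ j, graphLap N ⊤ w i j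
      = ∑ j, ((if i = j then graphLap N ⊤ w i i else 0) + (if i ≠ j then -w i j else 0)) :=
        Finset.sum_congr rfl fun j _ => hsplit j
    _ = (∑ j, if i = j then graphLap N ⊤ w i i else 0) + ∑ j, (if i ≠ j then -w i j else 0) :=
        Finset.sum_add_distrib
    _ = graphLap N ⊤ w i i - ∑ j, (if i ≠ j then w i j else 0) := by
        rw [Finset.sum_ite_eq]
        simp only [Finset.mem_univ, if_true]
        congr 1
        rw [← Finset.sum_neg_distrib]
        refine Finset.sum_congr rfl fun j _ => ?_
        by_cases h : i = j <;> simp [h]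
    _ = 0 := by rw [hD]; ring

lemma graphLap_det (w : Fin N → Fin N → ℝ) (hN : 2 ≤ N) :
    (graphLap N ⊤ w).det = 0 := by
  rw [← Matrix.exists_mulVec_eq_zero_iff]
  refine ⟨fun _ => 1, ?_, ?_⟩
  · intro h
    have : Fin N := ⟨0, by omega⟩
    have := congrFun h this
    simp at this
  · funext i
    simp only [Matrix.mulVec, dotProduct, mul_one, Pi.zero_apply]
    exact graphLap_rowsum w i

end lap

section eig

variable {N : ℕ}

lemma trace_eq_sum_eigs (M : Matrix (Fin N) (Fin N) ℝ) (hM : M.IsHermitian) :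
    M.trace = ∑ i, hM.eigenvalues i := by
  simpa using hM.trace_eq_sum_eigenvalues

lemma eigs_struct (hN : 2 ≤ N) (M : Matrix (Fin N) (Fin N) ℝ) (hM : M.IsHermitian) :
    ∃ (a b : ℝ) (t : List ℝ),
      lambda2 M = b ∧ a ≤ b ∧ (∀ x ∈ t, b ≤ x) ∧
      a + b + t.sum = M.trace ∧ (t.length : ℕ) + 2 = N ∧
      (∀ x, (x = a ∨ x = b ∨ x ∈ t) ↔ ∃ i, hM.eigenvalues i = x) := by
  have heigs : eigs M = Multiset.map hM.eigenvalues Finset.univ.val := by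
    rw [eigs, dif_pos hM]
  set l : List ℝ := (eigs M).sort (· ≤ ·) with hl
  have hlen : l.length = N := by
    rw [hl, Multiset.length_sort, heigs, Multiset.card_map]
    simp
  have hsort : l.Pairwise (· ≤ ·) := Multiset.pairwise_sort _ _
  have hsum : l.sum = M.trace := by
    have : (l : Multiset ℝ) = eigs M := Multiset.sort_eq _ _
    rw [trace_eq_sum_eigs M hM]
    calc l.sum = (l : Multiset ℝ).sum := (Multiset.sum_coe l).symm
      _ = (eigs M).sum := by rw [this]
      _ = ∑ i, hM.eigenvalues i := by rw [heigs]; rfl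
  have hmem : ∀ x, x ∈ l ↔ ∃ i, hM.eigenvalues i = x := by
    intro x
    rw [hl, Multiset.mem_sort, heigs, Multiset.mem_map]
    constructor
    · rintro ⟨i, _, hi⟩; exact ⟨i, hi⟩
    · rintro ⟨i, hi⟩; exact ⟨i, Multiset.mem_toFinset.mp (by simp), hi⟩
  match hmatch : l with
  | [] => simp at hlen; omega
  | [a] => simp at hlen; omega
  | a :: b :: t =>
    refine ⟨a, b, t, ?_, ?_, ?_, ?_, ?_, ?_⟩
    · rw [lambda2, ← hl]; rfl
    · exact (List.pairwise_cons.mp hsort).1 b (List.mem_cons_self)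
    · intro x hx
      exact (List.pairwise_cons.mp (List.pairwise_cons.mp hsort).2).1 x hx
    · simpa [add_assoc] using hsum
    · simpa using hlen
    · intro x; rw [← hmem x]; simp
end eig

example : True := trivial

section main

variable {N : ℕ}

lemma lambda2_key (hN : 2 ≤ N) (M : Matrix (Fin N) (Fin N) ℝ)
    (hM : M.IsHermitian) (hdet : M.det = 0) (hpos : 0 < lambda2 M) :
    ((N : ℝ) - 1) * lambda2 M ≤ M.trace := by
  obtain ⟨a, b, t, hb, hab, ht, hsum, hlen, hmem⟩ := eigs_struct hN M hM
  have h0 : ∃ i, hM.eigenvalues i = 0 := by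
    have hprod := hM.det_eq_prod_eigenvalues
    rw [hdet] at hprod
    have hprod' : ∏ i, hM.eigenvalues i = 0 := by exact_mod_cast hprod.symm
    obtain ⟨i, _, hi⟩ := Finset.prod_eq_zero_iff.mp hprod'
    exact ⟨i, hi⟩
  have h0' : (0:ℝ) = a ∨ (0:ℝ) = b ∨ (0:ℝ) ∈ t := (hmem 0).mpr h0
  rw [hb] at hpos ⊢
  have ha : a = 0 := by
    rcases h0' with h | h | h
    · exact h.symm
    · linarith
    · have := ht 0 h; linarith
  have hts := list_sum_ge b t ht
  have hlen' : (t.length : ℝ) = (N : ℝ) - 2 := by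
    have : ((t.length : ℝ)) + 2 = N := by exact_mod_cast hlen
    linarith
  rw [hlen'] at hts
  have hring : ((N:ℝ) - 1) * b = ((N:ℝ) - 2) * b + b := by ring
  linarith

lemma lambda2_ge (hN : 2 ≤ N) (M : Matrix (Fin N) (Fin N) ℝ)
    (hM : M.IsHermitian) (c : ℝ) (hc : 0 < c)
    (heig : ∀ i, hM.eigenvalues i = 0 ∨ hM.eigenvalues i = c)
    (htr : ((N:ℝ) - 2) * c < M.trace) : c ≤ lambda2 M := by
  obtain ⟨a, b, t, hb, hab, ht, hsum, hlen, hmem⟩ := eigs_struct hN M hM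
  rw [hb]
  by_contra hlt
  push_neg at hlt
  have hb0 : b = 0 := by
    obtain ⟨i, hi⟩ := (hmem b).mp (Or.inr (Or.inl rfl))
    rcases heig i with h | h
    · rw [hi] at h; exact h
    · rw [hi] at h; linarith
  have hav : a = 0 := by
    obtain ⟨i, hi⟩ := (hmem a).mp (Or.inl rfl)
    rcases heig i with h | h
    · rw [hi] at h; exact h
    · rw [hi] at h; linarith
  have htle : ∀ x ∈ t, x ≤ c := by
    intro x hx
    obtain ⟨i, hi⟩ := (hmem x).mp (Or.inr (Or.inr hx))
    rcases heig i with h | h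
    · rw [hi] at h; linarith
    · rw [hi] at h; linarith
  have hle := list_sum_le c t htle
  have hlen' : (t.length : ℝ) = (N : ℝ) - 2 := by
    have : ((t.length : ℝ)) + 2 = N := by exact_mod_cast hlen
    linarith
  rw [hlen'] at hle
  linarith

lemma graphLap_const_apply (c : ℝ) (i j : Fin N) :
    graphLap N ⊤ (fun _ _ => c) i j = (if i = j then (N:ℝ)*c else 0) - c := by
  by_cases h : i = j
  · subst h
    simp only [graphLap, Matrix.of_apply, if_pos rfl, SimpleGraph.top_adj]
    have h1 : ∀ k : Fin N, (if i ≠ k then c else 0) = c - (if i = k then c else 0) := by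
      intro k; by_cases hk : i = k <;> simp [hk]
    rw [Finset.sum_congr rfl fun k _ => h1 k, Finset.sum_sub_distrib, Finset.sum_const,
      Finset.card_univ, Fintype.card_fin, Finset.sum_ite_eq]
    simp [nsmul_eq_mul]
  · simp [graphLap, h, SimpleGraph.top_adj]

lemma graphLap_const_sq (c : ℝ) :
    graphLap N ⊤ (fun _ _ => c) * graphLap N ⊤ (fun _ _ => c)
      = ((N:ℝ)*c) • graphLap N ⊤ (fun _ _ => c) := by
  ext i j
  rw [Matrix.mul_apply]
  simp only [graphLap_const_apply, Matrix.smul_apply, smul_eq_mul]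
  have expand : ∀ k : Fin N,
      ((if i = k then (N:ℝ)*c else 0) - c) * ((if k = j then (N:ℝ)*c else 0) - c)
      = (if i = k then ((N:ℝ)*c) * (if k = j then (N:ℝ)*c else 0) else 0)
        - c * (if i = k then (N:ℝ)*c else 0) - c * (if k = j then (N:ℝ)*c else 0) + c*c := by
    intro k
    by_cases h1 : i = k <;> by_cases h2 : k = j <;> subst_vars <;> simp [*] <;> ring
  rw [Finset.sum_congr rfl fun k _ => expand k]
  rw [Finset.sum_add_distrib, Finset.sum_sub_distrib, Finset.sum_sub_distrib,
    ← Finset.mul_sum, ← Finset.mul_sum, Finset.sum_ite_eq, Finset.sum_ite_eq',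
    Finset.sum_ite_eq, Finset.sum_const, Finset.card_univ, Fintype.card_fin]
  simp only [Finset.mem_univ, if_true, nsmul_eq_mul]
  by_cases h : i = j <;> simp [h] <;> ring

lemma eig_dichotomy (hN : 2 ≤ N) (c : ℝ)
    (hM : (graphLap N ⊤ (fun _ _ => c)).IsHermitian) (i : Fin N) :
    hM.eigenvalues i = 0 ∨ hM.eigenvalues i = (N:ℝ)*c := by
  have hv : graphLap N ⊤ (fun _ _ => c) *ᵥ ⇑(hM.eigenvectorBasis i)
      = hM.eigenvalues i • ⇑(hM.eigenvectorBasis i) :=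
    hM.mulVec_eigenvectorBasis i
  have hv0 : hM.eigenvectorBasis i ≠ 0 := hM.eigenvectorBasis.orthonormal.ne_zero i
  obtain ⟨k, hk⟩ : ∃ k, hM.eigenvectorBasis i k ≠ 0 := by
    by_contra h; push_neg at h
    exact hv0 (by ext k; exact h k)
  have h2 : graphLap N ⊤ (fun _ _ => c) *ᵥ (graphLap N ⊤ (fun _ _ => c) *ᵥ ⇑(hM.eigenvectorBasis i))
      = (hM.eigenvalues i * hM.eigenvalues i) • ⇑(hM.eigenvectorBasis i) := by
    rw [hv, mulVec_smul, hv, smul_smul]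
  rw [mulVec_mulVec, graphLap_const_sq, smul_mulVec, hv, smul_smul] at h2
  have hμ : (N:ℝ)*c * hM.eigenvalues i = hM.eigenvalues i * hM.eigenvalues i := by
    have := congrFun h2 k
    simp only [Pi.smul_apply, smul_eq_mul] at this
    exact mul_right_cancel₀ hk this
  have hfac : hM.eigenvalues i * (hM.eigenvalues i - (N:ℝ)*c) = 0 := by linear_combination -hμ
  rcases mul_eq_zero.mp hfac with h | h
  · exact Or.inl h
  · exact Or.inr (by linarith)

end main

/-- Optimal SLEM of the FDTQC problem on the complete graph `K_N` (case `N ≤ d²`):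
for every weight function, `max{1 − λ₂, 2W − 1} ≥ (N−2)/N`, with equality at the
uniform weight `2/N²`. -/
theorem complete_graph_optimal_slem (N : ℕ) (hN : 2 ≤ N) :
    (∀ w : Fin N → Fin N → ℝ, (∀ i j, w i j = w j i) →
      ((N : ℝ) - 2) / N ≤
        max (1 - lambda2 (graphLap N ⊤ w)) (2 * totalW N ⊤ w - 1)) ∧
    max (1 - lambda2 (graphLap N ⊤ (fun _ _ => 2 / (N : ℝ) ^ 2)))
        (2 * totalW N ⊤ (fun _ _ => 2 / (N : ℝ) ^ 2) - 1) = ((N : ℝ) - 2) / N := by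
  have hNr : (2:ℝ) ≤ (N:ℝ) := by exact_mod_cast hN
  have hN0 : (0:ℝ) < (N:ℝ) := by linarith
  have hNne : (N:ℝ) ≠ 0 := ne_of_gt hN0
  have h3 : ((N:ℝ)-2)/N = 1 - 2/N := by field_simp
  constructor
  · intro w hw
    have hM := graphLap_isHermitian w hw
    by_cases hb : lambda2 (graphLap N ⊤ w) ≤ 2 / N
    · refine le_max_of_le_left ?_
      rw [h3]; linarith
    · push_neg at hb
      refine le_max_of_le_right ?_
      have hpos : 0 < lambda2 (graphLap N ⊤ w) := lt_trans (by positivity) hb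
      have hkey := lambda2_key hN _ hM (graphLap_det w hN) hpos
      rw [trace_eq_two_totalW w hw] at hkey
      have h1 : ((N:ℝ)-1) * (2/N) ≤ ((N:ℝ)-1) * lambda2 (graphLap N ⊤ w) :=
        mul_le_mul_of_nonneg_left (le_of_lt hb) (by linarith)
      have h2 : ((N:ℝ)-1) * (2/N) = 2 - 2/N := by field_simp
      linarith
  · set c : ℝ := 2/(N:ℝ)^2 with hc
    have hM := graphLap_isHermitian (fun (_ _ : Fin N) => c) (fun _ _ => rfl)
    have hNc : (N:ℝ)*c = 2/N := by rw [hc]; field_simp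
    have htr : (graphLap N ⊤ (fun (_ _ : Fin N) => c)).trace = (N:ℝ) * ((N:ℝ)*c - c) := by
      rw [Matrix.trace]
      have hdiag : ∀ i : Fin N, (graphLap N ⊤ (fun _ _ => c)).diag i = (N:ℝ)*c - c := by
        intro i
        rw [Matrix.diag_apply, graphLap_const_apply c i i, if_pos rfl]
      rw [Finset.sum_congr rfl fun i _ => hdiag i, Finset.sum_const, Finset.card_univ,
        Fintype.card_fin, nsmul_eq_mul]
    have htrval : (N:ℝ) * ((N:ℝ)*c - c) = 2 - 2/N := by rw [hc]; field_simp
    have hW : 2 * totalW N ⊤ (fun _ _ => c) - 1 = ((N:ℝ)-2)/N := by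
      rw [← trace_eq_two_totalW (fun (_ _ : Fin N) => c) (fun _ _ => rfl), htr, htrval, h3]
      ring
    have hl2 : 2/(N:ℝ) ≤ lambda2 (graphLap N ⊤ (fun _ _ => c)) := by
      apply lambda2_ge hN _ hM (2/N) (by positivity)
      · intro i
        rcases eig_dichotomy hN c hM i with h | h
        · exact Or.inl h
        · exact Or.inr (by rw [h, hNc])
      · rw [htr, htrval]
        have : ((N:ℝ)-2) * (2/N) = 2 - 4/N := by field_simp; ring
        rw [this]
        have h4 : (2:ℝ)/N < 4/N := by
          rw [div_lt_div_iff₀ hN0 hN0]; nlinarith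
        linarith
    rw [hW]
    apply max_eq_right
    rw [h3]
    linarith
end
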